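/- The map f : ℝ³ → ℝ³ given in cylindrical coordinates by f(r, θ, z) = (r, θ - z, ½ z (1 + z²/3 + r²)) is a bijection. -/

import Mathlib

/-- The map `f(r, θ, z) = (r, θ - z, ½ z (1 + z²/3 + r²))`, written in Cartesian
coordinates `(x, y, z)` as a rotation by angle `-z` in the `(x,y)`-plane together with a
reparametrization of `z`. -/
noncomputable def fGeiges : ℝ × ℝ × ℝ → ℝ × ℝ × ℝ :=
  fun p =>
    (p.1 * Real.cos p.2.2 + p.2.1 * Real.sin p.2.2,
     -p.1 * Real.sin p.2.2 + p.2.1 * Real.cos p.2.2,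
     p.2.2 * (1 + p.2.2 ^ 2 / 3 + p.1 ^ 2 + p.2.1 ^ 2) / 2)

private lemma geiges_cube_strictMono (s : ℝ) (hs : 0 ≤ s) :
    StrictMono (fun z : ℝ => z * (1 + z ^ 2 / 3 + s) / 2) := by
  intro a b hab
  simp only
  nlinarith [sq_nonneg (a + b), sq_nonneg (a - b), sq_nonneg a, sq_nonneg b,
    mul_nonneg hs (sub_pos.mpr hab).le]

private lemma geiges_cube_surjective (s : ℝ) (hs : 0 ≤ s) :
    Function.Surjective (fun z : ℝ => z * (1 + z ^ 2 / 3 + s) / 2) := by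
  have hcont : Continuous (fun z : ℝ => z * (1 + z ^ 2 / 3 + s) / 2) := by continuity
  apply Continuous.surjective hcont
  · refine Filter.tendsto_atTop_mono' Filter.atTop (f₁ := fun z : ℝ => z / 2) ?_
      (Filter.Tendsto.atTop_div_const (show (0:ℝ) < 2 by norm_num) Filter.tendsto_id)
    filter_upwards [Filter.eventually_ge_atTop (0 : ℝ)] with z hz
    nlinarith [sq_nonneg z]
  · refine Filter.tendsto_atBot_mono' Filter.atBot (f₁ := fun z : ℝ => z / 2) ?_
      (Filter.Tendsto.atBot_div_const (show (0:ℝ) < 2 by norm_num) Filter.tendsto_id)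
    filter_upwards [Filter.eventually_le_atBot (0 : ℝ)] with z hz
    nlinarith [sq_nonneg z]

/-- The map `f(r, θ, z) = (r, θ - z, ½ z (1 + z²/3 + r²))` is a bijection of `ℝ³`. -/
theorem fGeiges_bijective : Function.Bijective fGeiges := by
  constructor
  · rintro ⟨x1, y1, z1⟩ ⟨x2, y2, z2⟩ h
    simp only [fGeiges, Prod.mk.injEq] at h
    obtain ⟨h1, h2, h3⟩ := h
    have pyth1 := Real.sin_sq_add_cos_sq z1
    have pyth2 := Real.sin_sq_add_cos_sq z2
    -- the rotation preserves the squared norm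
    have e1 : (x1 * Real.cos z1 + y1 * Real.sin z1) ^ 2
        + (-x1 * Real.sin z1 + y1 * Real.cos z1) ^ 2 = x1 ^ 2 + y1 ^ 2 := by
      linear_combination (x1 ^ 2 + y1 ^ 2) * pyth1
    have e2 : (x2 * Real.cos z2 + y2 * Real.sin z2) ^ 2
        + (-x2 * Real.sin z2 + y2 * Real.cos z2) ^ 2 = x2 ^ 2 + y2 ^ 2 := by
      linear_combination (x2 ^ 2 + y2 ^ 2) * pyth2
    have hnorm : x1 ^ 2 + y1 ^ 2 = x2 ^ 2 + y2 ^ 2 := by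
      rw [← e1, ← e2, h1, h2]
    have hs : (0:ℝ) ≤ x1 ^ 2 + y1 ^ 2 := by positivity
    have hz : z1 = z2 := by
      refine (geiges_cube_strictMono (x1 ^ 2 + y1 ^ 2) hs).injective (a₁ := z1) (a₂ := z2) ?_
      show z1 * (1 + z1 ^ 2 / 3 + (x1 ^ 2 + y1 ^ 2)) / 2
          = z2 * (1 + z2 ^ 2 / 3 + (x1 ^ 2 + y1 ^ 2)) / 2
      linear_combination h3 - z2 / 2 * hnorm
    subst hz
    have hx : x1 = x2 := by
      linear_combination Real.cos z1 * h1 - Real.sin z1 * h2 + (x2 - x1) * pyth1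
    have hy : y1 = y2 := by
      linear_combination Real.sin z1 * h1 + Real.cos z1 * h2 + (y2 - y1) * pyth1
    simp [hx, hy]
  · rintro ⟨a, b, c⟩
    have hs : (0:ℝ) ≤ a ^ 2 + b ^ 2 := by positivity
    obtain ⟨z, hz⟩ := geiges_cube_surjective (a ^ 2 + b ^ 2) hs c
    simp only at hz
    refine ⟨(a * Real.cos z - b * Real.sin z, a * Real.sin z + b * Real.cos z, z), ?_⟩
    have pyth := Real.sin_sq_add_cos_sq z
    simp only [fGeiges, Prod.mk.injEq]
    refine ⟨by linear_combination a * pyth, by linear_combination b * pyth, ?_⟩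
    have hxy : (a * Real.cos z - b * Real.sin z) ^ 2 + (a * Real.sin z + b * Real.cos z) ^ 2
        = a ^ 2 + b ^ 2 := by linear_combination (a ^ 2 + b ^ 2) * pyth
    linear_combination hz + z / 2 * hxy
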